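/- Let Ω ⊆ ℝⁿ satisfy the ε-ball condition, choose the local frame at x₀ ∈ ∂Ω, and set r = (√3/2)ε. Then there is a single function φ : D_r(0') → (−ε, ε) with φ(0') = 0 such that ∂Ω ∩ (D_r(0') × (−ε, ε)) = {(x', φ(x')) : x' ∈ D_r(0')} and Ω ∩ (D_r(0') × (−ε, ε)) = {(x', x_n) : x' ∈ D_r(0'), −ε < x_n < φ(x')}. -/
import Mathlib

set_option maxHeartbeats 1000000

open Metric
open scoped RealInnerProductSpace

private lemma aux_two_mul_le_dist {E : Type*} [NormedAddCommGroup E] [NormedSpace ℝ E]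
    {c₁ c₂ : E} {ε : ℝ} (h : Disjoint (ball c₁ ε) (ball c₂ ε)) : 2 * ε ≤ dist c₁ c₂ := by
  by_contra hlt
  push_neg at hlt
  have h2 : dist c₁ c₂ / 2 < ε := by linarith
  have hm₁ : midpoint ℝ c₁ c₂ ∈ ball c₁ ε := by
    rw [mem_ball, dist_midpoint_left]
    rw [show ‖(2:ℝ)‖⁻¹ = (2:ℝ)⁻¹ by simp]; linarith
  have hm₂ : midpoint ℝ c₁ c₂ ∈ ball c₂ ε := by
    rw [mem_ball, dist_midpoint_right]
    rw [show ‖(2:ℝ)‖⁻¹ = (2:ℝ)⁻¹ by simp]; linarith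
  exact (h.ne_of_mem hm₁ hm₂) rfl

/-- In the local frame at `x₀ ∈ ∂Ω` and with `r = (√3/2)ε`, there is a single function
`φ : D_r(0') → (−ε, ε)` with `φ(0') = 0` whose graph is `∂Ω` in the cylinder
`D_r(0') × (−ε, ε)` and below which lies `Ω`. -/
theorem stmt_11 {n : ℕ} (hn : 2 ≤ n) (ε : ℝ) (hε : 0 < ε)
    (Ω : Set (EuclideanSpace ℝ (Fin n))) (hΩ : IsOpen Ω)
    (hball : ∀ x ∈ frontier Ω, ∃ d : EuclideanSpace ℝ (Fin n), ‖d‖ = 1 ∧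
      ball (x - ε • d) ε ⊆ Ω ∧ ball (x + ε • d) ε ⊆ (closure Ω)ᶜ)
    (x₀ : EuclideanSpace ℝ (Fin n)) (hx₀ : x₀ ∈ frontier Ω)
    (d₀ : EuclideanSpace ℝ (Fin n)) (hd₀ : ‖d₀‖ = 1)
    (h1 : ball (x₀ - ε • d₀) ε ⊆ Ω) (h2 : ball (x₀ + ε • d₀) ε ⊆ (closure Ω)ᶜ) :
    ∃ φ : EuclideanSpace ℝ (Fin n) → ℝ, φ 0 = 0 ∧
      ∀ v : EuclideanSpace ℝ (Fin n), ⟪v, d₀⟫ = 0 → ‖v‖ < Real.sqrt 3 / 2 * ε →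
        φ v ∈ Set.Ioo (-ε) ε ∧
        ∀ t ∈ Set.Ioo (-ε) ε,
          (x₀ + v + t • d₀ ∈ frontier Ω ↔ t = φ v) ∧
          (x₀ + v + t • d₀ ∈ Ω ↔ t < φ v) := by
  have hsq : ∀ u : EuclideanSpace ℝ (Fin n), ‖u‖ < ε ↔ ‖u‖ ^ 2 < ε ^ 2 := by
    intro u; constructor <;> intro h <;> nlinarith [norm_nonneg u]
  set A : EuclideanSpace ℝ (Fin n) → Set ℝ :=
    fun v => {t | t ∈ Set.Ioo (-ε) ε ∧ ∀ s ∈ Set.Ioc (-ε) t, x₀ + v + s • d₀ ∈ Ω} with hAdef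
  have key : ∀ v : EuclideanSpace ℝ (Fin n), ⟪v, d₀⟫ = 0 → ‖v‖ < Real.sqrt 3 / 2 * ε →
      sSup (A v) ∈ Set.Ioo (-ε) ε ∧ ∀ t ∈ Set.Ioo (-ε) ε,
        (x₀ + v + t • d₀ ∈ frontier Ω ↔ t = sSup (A v)) ∧
        (x₀ + v + t • d₀ ∈ Ω ↔ t < sSup (A v)) := by
    intro v hv hvn
    have hρ2 : ‖v‖ ^ 2 < 3 / 4 * ε ^ 2 := by
      have h3 : Real.sqrt 3 ^ 2 = 3 := Real.sq_sqrt (by norm_num)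
      nlinarith [norm_nonneg v, Real.sqrt_nonneg 3]
    set s₀ := Real.sqrt (ε ^ 2 - ‖v‖ ^ 2) with hs₀def
    have hs₀sq : s₀ ^ 2 = ε ^ 2 - ‖v‖ ^ 2 := Real.sq_sqrt (by nlinarith)
    have hs₀nn : 0 ≤ s₀ := Real.sqrt_nonneg _
    have hs₀gt : ε / 2 < s₀ := by nlinarith
    have hs₀le : s₀ ≤ ε := by nlinarith
    -- Pythagoras along the axis
    have pyth : ∀ τ : ℝ, ‖v + τ • d₀‖ ^ 2 = ‖v‖ ^ 2 + τ ^ 2 := by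
      intro τ
      rw [norm_add_sq_real, real_inner_smul_right, hv, norm_smul, hd₀, Real.norm_eq_abs]
      simp [sq_abs]
    have hmix : ∀ (τ μ : ℝ) (e : EuclideanSpace ℝ (Fin n)), ‖e‖ = 1 →
        ‖τ • d₀ + μ • e‖ ^ 2 = τ ^ 2 + 2 * τ * μ * ⟪d₀, e⟫ + μ ^ 2 := by
      intro τ μ e he
      rw [norm_add_sq_real, real_inner_smul_left, real_inner_smul_right,
        norm_smul, norm_smul, he, hd₀, Real.norm_eq_abs, Real.norm_eq_abs,
        mul_one, mul_one, sq_abs, sq_abs]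
      ring
    -- geometry at a frontier point on the line
    have geo : ∀ t : ℝ, x₀ + v + t • d₀ ∈ frontier Ω →
        ∃ d : EuclideanSpace ℝ (Fin n), ‖d‖ = 1 ∧
          ball (x₀ + v + t • d₀ - ε • d) ε ⊆ Ω ∧
          ball (x₀ + v + t • d₀ + ε • d) ε ⊆ (closure Ω)ᶜ ∧
          2 * ε ^ 2 - ‖v‖ ^ 2 - t ^ 2 ≤ 2 * ε ^ 2 * ⟪d₀, d⟫ := by
      intro t hfr
      obtain ⟨d, hd, hdi, hde⟩ := hball _ hfr
      refine ⟨d, hd, hdi, hde, ?_⟩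
      have hdisj₁ : Disjoint (ball (x₀ - ε • d₀) ε) (ball (x₀ + v + t • d₀ + ε • d) ε) :=
        Set.disjoint_left.mpr fun z hz₁ hz₂ => (hde hz₂) (subset_closure (h1 hz₁))
      have hdisj₂ : Disjoint (ball (x₀ + v + t • d₀ - ε • d) ε) (ball (x₀ + ε • d₀) ε) :=
        Set.disjoint_left.mpr fun z hz₁ hz₂ => (h2 hz₂) (subset_closure (hdi hz₁))
      have e₁ := aux_two_mul_le_dist hdisj₁
      have e₂ := aux_two_mul_le_dist hdisj₂
      rw [dist_eq_norm] at e₁ e₂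
      have r₁ : x₀ - ε • d₀ - (x₀ + v + t • d₀ + ε • d)
          = -((v + t • d₀) + ε • (d₀ + d)) := by module
      have r₂ : x₀ + v + t • d₀ - ε • d - (x₀ + ε • d₀)
          = (v + t • d₀) - ε • (d₀ + d) := by module
      rw [r₁, norm_neg] at e₁
      rw [r₂] at e₂
      have q₁ : (2 * ε) ^ 2 ≤ ‖(v + t • d₀) + ε • (d₀ + d)‖ ^ 2 := by
        nlinarith [norm_nonneg ((v + t • d₀) + ε • (d₀ + d))]
      have q₂ : (2 * ε) ^ 2 ≤ ‖(v + t • d₀) - ε • (d₀ + d)‖ ^ 2 := by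
        nlinarith [norm_nonneg ((v + t • d₀) - ε • (d₀ + d))]
      have par := parallelogram_law_with_norm ℝ (v + t • d₀) (ε • (d₀ + d))
      have par2 : ‖(v + t • d₀) + ε • (d₀ + d)‖ ^ 2 + ‖(v + t • d₀) - ε • (d₀ + d)‖ ^ 2
          = 2 * (‖v + t • d₀‖ ^ 2 + ‖ε • (d₀ + d)‖ ^ 2) := by
        ring_nf; ring_nf at par; linarith
      have ha : ‖v + t • d₀‖ ^ 2 = ‖v‖ ^ 2 + t ^ 2 := pyth t
      have hdd : ‖d₀ + d‖ ^ 2 = 2 + 2 * ⟪d₀, d⟫ := by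
        rw [norm_add_sq_real, hd₀, hd]; ring
      have hw : ‖ε • (d₀ + d)‖ ^ 2 = ε ^ 2 * (2 + 2 * ⟪d₀, d⟫) := by
        rw [norm_smul, Real.norm_eq_abs, mul_pow, sq_abs, hdd]
      linarith [par2, q₁, q₂, ha, hw.le, hw.ge]
    -- the set A v
    have hAlo : ∀ t : ℝ, -ε < t → t < -ε + s₀ → t ∈ A v := by
      intro t ht1 ht2
      refine ⟨⟨ht1, by linarith⟩, fun s hs => ?_⟩
      apply h1
      rw [mem_ball, dist_eq_norm,
        show x₀ + v + s • d₀ - (x₀ - ε • d₀) = v + (s + ε) • d₀ by module, hsq, pyth]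
      have h1' : 0 < s + ε := by linarith [hs.1]
      have h2' : s + ε < s₀ := by linarith [hs.2]
      nlinarith
    have hAub : ∀ t ∈ A v, t ≤ ε - s₀ := by
      intro t ht
      by_contra hgt
      push_neg at hgt
      have hmem : x₀ + v + t • d₀ ∈ Ω := ht.2 t ⟨ht.1.1, le_refl t⟩
      refine h2 ?_ (subset_closure hmem)
      rw [mem_ball, dist_eq_norm,
        show x₀ + v + t • d₀ - (x₀ + ε • d₀) = v + (t - ε) • d₀ by module, hsq, pyth]
      have h1' : -s₀ < t - ε := by linarith
      have h2' : t - ε < 0 := by linarith [ht.1.2]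
      nlinarith
    have hAne : (A v).Nonempty := ⟨-ε + s₀ / 2, hAlo _ (by linarith) (by linarith)⟩
    have hAbdd : BddAbove (A v) := ⟨ε - s₀, fun t ht => hAub t ht⟩
    set T := sSup (A v) with hTdef
    have hTub : T ≤ ε - s₀ := csSup_le hAne hAub
    have hTlb : -ε + s₀ ≤ T := by
      by_contra hlt
      push_neg at hlt
      have hm1 := le_max_left T (-ε)
      have hm2 := le_max_right T (-ε)
      have hmlt : max T (-ε) < -ε + s₀ := max_lt hlt (by linarith)
      have htA : (max T (-ε) + (-ε + s₀)) / 2 ∈ A v :=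
        hAlo _ (by linarith) (by linarith)
      have := le_csSup hAbdd htA
      linarith
    have hTIoo : T ∈ Set.Ioo (-ε) ε := ⟨by linarith, by linarith⟩
    have P1 : ∀ t : ℝ, -ε < t → t < T → x₀ + v + t • d₀ ∈ Ω := by
      intro t ht1 ht2
      obtain ⟨a, haA, hta⟩ := exists_lt_of_lt_csSup hAne ht2
      exact haA.2 t ⟨ht1, hta.le⟩
    have P2 : x₀ + v + T • d₀ ∉ Ω := by
      intro hmem
      obtain ⟨δ, hδ, hball'⟩ := Metric.isOpen_iff.mp hΩ _ hmem
      have hmin : 0 < min δ (ε - T) := lt_min hδ (by linarith [hTIoo.2])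
      have hminδ := min_le_left δ (ε - T)
      have hminε := min_le_right δ (ε - T)
      have ht'A : T + min δ (ε - T) / 2 ∈ A v := by
        refine ⟨⟨by linarith [hTIoo.1], by linarith⟩, fun s hs => ?_⟩
        rcases lt_or_ge s T with h | h
        · exact P1 s hs.1 h
        · apply hball'
          rw [mem_ball, dist_eq_norm,
            show x₀ + v + s • d₀ - (x₀ + v + T • d₀) = (s - T) • d₀ by module,
            norm_smul, hd₀, mul_one, Real.norm_eq_abs, abs_of_nonneg (by linarith)]
          have := hs.2
          linarith
      have := le_csSup hAbdd ht'A
      linarith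
    have P3 : x₀ + v + T • d₀ ∈ closure Ω := by
      rw [Metric.mem_closure_iff]
      intro δ hδ
      have hμpos : 0 < min (δ / 2) ((T + ε) / 2) := lt_min (by linarith) (by linarith [hTIoo.1])
      have hμ1 := min_le_left (δ / 2) ((T + ε) / 2)
      have hμ2 := min_le_right (δ / 2) ((T + ε) / 2)
      refine ⟨x₀ + v + (T - min (δ / 2) ((T + ε) / 2)) • d₀,
        P1 _ (by linarith [hTIoo.1]) (by linarith), ?_⟩
      rw [dist_eq_norm,
        show x₀ + v + T • d₀ - (x₀ + v + (T - min (δ / 2) ((T + ε) / 2)) • d₀)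
          = (min (δ / 2) ((T + ε) / 2)) • d₀ by module,
        norm_smul, hd₀, mul_one, Real.norm_eq_abs, abs_of_pos hμpos]
      linarith
    have hTfr : x₀ + v + T • d₀ ∈ frontier Ω := by
      rw [hΩ.frontier_eq]; exact ⟨P3, P2⟩
    have P4 : ∀ t : ℝ, T < t → t < ε → x₀ + v + t • d₀ ∉ closure Ω := by
      intro t htT htε hcl
      set B : Set ℝ := Set.Icc t (ε - s₀) ∩ {u : ℝ | x₀ + v + u • d₀ ∈ closure Ω} with hBdef
      have htle : t ≤ ε - s₀ := by
        by_contra hgt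
        push_neg at hgt
        refine h2 ?_ hcl
        rw [mem_ball, dist_eq_norm,
          show x₀ + v + t • d₀ - (x₀ + ε • d₀) = v + (t - ε) • d₀ by module, hsq, pyth]
        nlinarith
      have htB : t ∈ B := ⟨⟨le_refl t, htle⟩, hcl⟩
      have hBne : B.Nonempty := ⟨t, htB⟩
      have hBbdd : BddAbove B := ⟨ε - s₀, fun u hu => hu.1.2⟩
      have hcont : Continuous fun u : ℝ => x₀ + v + u • d₀ := by fun_prop
      have hBcl : IsClosed B := isClosed_Icc.inter (isClosed_closure.preimage hcont)
      have ht₂mem := hBcl.csSup_mem hBne hBbdd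
      set t₂ := sSup B with ht₂def
      have ht₂Icc := ht₂mem.1
      have ht₂cl : x₀ + v + t₂ • d₀ ∈ closure Ω := ht₂mem.2
      have ht₂T : T < t₂ := lt_of_lt_of_le htT (le_csSup hBbdd htB)
      have hz : x₀ + v + t₂ • d₀ ∉ Ω := by
        intro hmem
        obtain ⟨δ, hδ, hball'⟩ := Metric.isOpen_iff.mp hΩ _ hmem
        have hmin0 : 0 < min δ s₀ := lt_min hδ (by linarith)
        have hminδ := min_le_left δ s₀
        have hmins := min_le_right δ s₀
        have humem : x₀ + v + (t₂ + min δ s₀ / 2) • d₀ ∈ Ω := by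
          apply hball'
          rw [mem_ball, dist_eq_norm,
            show x₀ + v + (t₂ + min δ s₀ / 2) • d₀ - (x₀ + v + t₂ • d₀)
              = (min δ s₀ / 2) • d₀ by module,
            norm_smul, hd₀, mul_one, Real.norm_eq_abs, abs_of_pos (by linarith)]
          linarith
        rcases le_or_gt (t₂ + min δ s₀ / 2) (ε - s₀) with hle | hgt
        · have hmemB : t₂ + min δ s₀ / 2 ∈ B :=
            ⟨⟨by linarith [ht₂Icc.1], hle⟩, subset_closure humem⟩
          have := le_csSup hBbdd hmemB
          linarith
        · refine h2 ?_ (subset_closure humem)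
          rw [mem_ball, dist_eq_norm,
            show x₀ + v + (t₂ + min δ s₀ / 2) • d₀ - (x₀ + ε • d₀)
              = v + (t₂ + min δ s₀ / 2 - ε) • d₀ by module, hsq, pyth]
          have hu1 : t₂ + min δ s₀ / 2 - ε < 0 := by linarith [ht₂Icc.2]
          have hu2 : -s₀ < t₂ + min δ s₀ / 2 - ε := by linarith
          nlinarith
      have hzfr : x₀ + v + t₂ • d₀ ∈ frontier Ω := by
        rw [hΩ.frontier_eq]; exact ⟨ht₂cl, hz⟩
      obtain ⟨d₁, hd₁, hi₁, he₁, hc₁⟩ := geo T hTfr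
      obtain ⟨d₂, hd₂, hi₂, he₂, hc₂⟩ := geo t₂ hzfr
      have cov₁ : 2 * ε * ⟪d₀, d₁⟫ ≤ t₂ - T := by
        by_contra hlt
        push_neg at hlt
        refine he₁ ?_ ht₂cl
        rw [mem_ball, dist_eq_norm,
          show x₀ + v + t₂ • d₀ - (x₀ + v + T • d₀ + ε • d₁)
            = (t₂ - T) • d₀ + (-ε) • d₁ by module, hsq, hmix _ _ _ hd₁]
        nlinarith [ht₂T]
      have cov₂ : 2 * ε * ⟪d₀, d₂⟫ ≤ t₂ - T := by
        by_contra hlt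
        push_neg at hlt
        refine P2 (hi₂ ?_)
        rw [mem_ball, dist_eq_norm,
          show x₀ + v + T • d₀ - (x₀ + v + t₂ • d₀ - ε • d₂)
            = (T - t₂) • d₀ + ε • d₂ by module, hsq, hmix _ _ _ hd₂]
        nlinarith [ht₂T]
      have hεT : 2 * ε ^ 2 - ‖v‖ ^ 2 - T ^ 2 ≤ ε * (t₂ - T) := by nlinarith [hc₁, cov₁]
      have hεt₂ : 2 * ε ^ 2 - ‖v‖ ^ 2 - t₂ ^ 2 ≤ ε * (t₂ - T) := by nlinarith [hc₂, cov₂]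
      have f₁ : (0:ℝ) ≤ (ε - s₀ - t₂) * (3 * ε - s₀ + t₂) :=
        mul_nonneg (by linarith [ht₂Icc.2]) (by linarith [ht₂T.le])
      have f₂ : (0:ℝ) ≤ (ε - s₀ + T) * (3 * ε - s₀ - T) :=
        mul_nonneg (by linarith) (by linarith)
      have f₃ : 0 < ε * (s₀ - ε / 2) := mul_pos hε (by linarith)
      nlinarith [hεT, hεt₂, hs₀sq, f₁, f₂, f₃]
    refine ⟨hTIoo, fun t ht => ⟨⟨?_, ?_⟩, ?_, ?_⟩⟩
    · intro hfr
      rw [hΩ.frontier_eq] at hfr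
      by_contra hne
      rcases lt_or_gt_of_ne hne with h | h
      · exact hfr.2 (P1 t ht.1 h)
      · exact P4 t h ht.2 hfr.1
    · intro h; rw [h]; exact hTfr
    · intro hmem
      by_contra h
      push_neg at h
      rcases h.eq_or_lt with h' | h'
      · exact P2 (h' ▸ hmem)
      · exact P4 t h' ht.2 (subset_closure hmem)
    · exact fun h => P1 t ht.1 h
  refine ⟨fun v => sSup (A v), ?_, key⟩
  have h0 := key 0 (by simp) (by
    rw [norm_zero]; positivity)
  have hx0' : x₀ + 0 + (0:ℝ) • d₀ ∈ frontier Ω := by simpa using hx₀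
  exact (((h0.2 0 ⟨by linarith, hε⟩).1).mp hx0').symm
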